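/- There exists a constant C > 0 such that for all real numbers x ≥ 2, y ≥ 2 and every natural number k ≥ 1, the number of natural numbers n ≤ x with Ω(n; y) ≥ k is at most C·(k/2^k)·x·log y, where Ω(n; y) denotes the number of prime factors p ≤ y of n counted with multiplicity. -/

import Mathlib

open Finset ArithmeticFunction
open scoped Nat
open scoped ArithmeticFunction.Omega ArithmeticFunction.omega ArithmeticFunction.zeta

/-- `BigOmegaBelow n y` is `Ω(n; y)`, the number of prime factors of `n` not exceeding
`y`, counted with multiplicity. -/
noncomputable def BigOmegaBelow (n : ℕ) (y : ℝ) : ℕ :=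
  ∑ p ∈ n.primeFactors.filter (fun p : ℕ => (p : ℝ) ≤ y), n.factorization p

lemma theta_le (N : ℕ) : ∑ p ∈ (N+1).primesBelow, Real.log p ≤ N * Real.log 4 := by
  have hpb : (N+1).primesBelow = Finset.filter (fun p => p.Prime) (range (N+1)) := rfl
  have h1 : ∑ p ∈ (N+1).primesBelow, Real.log p = Real.log (primorial N) := by
    rw [primorial, ← hpb, Nat.cast_prod, Real.log_prod]
    intro p hp
    exact_mod_cast (Nat.prime_of_mem_primesBelow hp).pos.ne'
  rw [h1]
  calc Real.log (primorial N) ≤ Real.log ((4:ℕ)^N) := by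
        apply Real.log_le_log (by exact_mod_cast primorial_pos N)
        exact_mod_cast primorial_le_4_pow N
    _ = N * Real.log 4 := by push_cast; rw [Real.log_pow]

lemma factorial_le_pow' (N : ℕ) : N ! ≤ N ^ N := by
  induction N with
  | zero => simp
  | succ n ih =>
    calc (n+1)! = (n+1) * n ! := rfl
      _ ≤ (n+1) * n ^ n := by exact Nat.mul_le_mul_left _ ih
      _ ≤ (n+1) * (n+1) ^ n := by
          exact Nat.mul_le_mul_left _ (Nat.pow_le_pow_left (Nat.le_succ n) n)
      _ = (n+1)^(n+1) := by ring

lemma mertens1 (N : ℕ) (hN : 1 ≤ N) :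
    ∑ p ∈ (N+1).primesBelow, Real.log p / p ≤ Real.log N + 2 := by
  have hNR : (0:ℝ) < N := by exact_mod_cast hN
  -- Legendre lower bound
  have hleg : ∀ p ∈ (N+1).primesBelow, (N / p : ℕ) ≤ (N !).factorization p := by
    intro p hp
    have hp' := Nat.prime_of_mem_primesBelow hp
    have hpN : p ≤ N := Nat.lt_succ_iff.mp (Nat.lt_of_mem_primesBelow hp)
    have hdvd : p ^ (N / p) ∣ N ! := by
      rw [Nat.Prime.pow_dvd_factorial_iff hp' (Nat.lt_succ_self _)]
      have h1 : 1 ∈ Finset.Ico 1 (Nat.log p N + 1) := by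
        simp [Nat.lt_succ_iff, Nat.log_pos hp'.one_lt hpN]
      calc N / p = N / p ^ 1 := by norm_num
        _ ≤ ∑ i ∈ Finset.Ico 1 (Nat.log p N + 1), N / p ^ i :=
          Finset.single_le_sum (f := fun i => N / p ^ i) (fun i _ => Nat.zero_le _) h1
    exact (Nat.Prime.pow_dvd_iff_le_factorization hp' (Nat.factorial_ne_zero N)).mp hdvd
  have hlogfact : Real.log (N !) = ∑ p ∈ (N !).factorization.support,
      ((N !).factorization p : ℝ) * Real.log p := by
    conv_lhs => rw [← Nat.factorization_prod_pow_eq_self (Nat.factorial_ne_zero N)]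
    rw [Finsupp.prod, Nat.cast_prod, Real.log_prod]
    · apply Finset.sum_congr rfl
      intro p hp
      push_cast
      rw [Real.log_pow]
    · intro p hp
      have hp' : p.Prime := Nat.prime_of_mem_primeFactors (by rwa [← Nat.support_factorization])
      exact_mod_cast (pow_pos hp'.pos _).ne'
  have key : ∑ p ∈ (N+1).primesBelow, ((N / p : ℕ) : ℝ) * Real.log p ≤ Real.log (N !) := by
    rw [hlogfact]
    have hsub : (N+1).primesBelow ⊆ (N !).factorization.support := by
      intro p hp
      have hp' := Nat.prime_of_mem_primesBelow hp
      have hpN : p ≤ N := Nat.lt_succ_iff.mp (Nat.lt_of_mem_primesBelow hp)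
      rw [Nat.support_factorization, Nat.mem_primeFactors]
      exact ⟨hp', Nat.dvd_factorial hp'.pos hpN, Nat.factorial_ne_zero N⟩
    calc ∑ p ∈ (N+1).primesBelow, ((N / p : ℕ) : ℝ) * Real.log p
        ≤ ∑ p ∈ (N+1).primesBelow, ((N !).factorization p : ℝ) * Real.log p := by
          apply Finset.sum_le_sum
          intro p hp
          have hp' := Nat.prime_of_mem_primesBelow hp
          have hlog : (0:ℝ) ≤ Real.log p := Real.log_nonneg (by exact_mod_cast hp'.one_lt.le)
          exact mul_le_mul_of_nonneg_right (by exact_mod_cast hleg p hp) hlog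
      _ ≤ ∑ p ∈ (N !).factorization.support, ((N !).factorization p : ℝ) * Real.log p := by
          apply Finset.sum_le_sum_of_subset_of_nonneg hsub
          intro p hp _
          have hp' : p.Prime := Nat.prime_of_mem_primeFactors (by rwa [← Nat.support_factorization])
          have h1 : (1:ℝ) ≤ p := by exact_mod_cast hp'.one_lt.le
          positivity
  have hfact_le : Real.log (N !) ≤ N * Real.log N := by
    calc Real.log (N !) ≤ Real.log ((N:ℝ)^N) := by
          apply Real.log_le_log (by exact_mod_cast Nat.factorial_pos N)
          exact_mod_cast factorial_le_pow' N
      _ = N * Real.log N := Real.log_pow N N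
  -- lower bound each term
  have hlow : ∀ p ∈ (N+1).primesBelow,
      (N:ℝ) * (Real.log p / p) - Real.log p ≤ ((N / p : ℕ) : ℝ) * Real.log p := by
    intro p hp
    have hp' := Nat.prime_of_mem_primesBelow hp
    have hppos : (0:ℝ) < p := by exact_mod_cast hp'.pos
    have hlog : (0:ℝ) ≤ Real.log p := Real.log_nonneg (by exact_mod_cast hp'.one_lt.le)
    have hcast : (N:ℝ)/p - 1 ≤ ((N / p : ℕ) : ℝ) := by
      have h2 : N < p * (N / p) + p := by
        have h5 := Nat.div_add_mod N p
        have h6 := Nat.mod_lt N hp'.pos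
        omega
      have h3 : (N:ℝ) < p * ((N/p : ℕ)) + p := by exact_mod_cast h2
      rw [div_sub_one hppos.ne', div_le_iff₀ hppos]
      nlinarith
    have hmul := mul_le_mul_of_nonneg_right hcast hlog
    have he : ((N:ℝ)/p - 1) * Real.log p = (N:ℝ) * (Real.log p / p) - Real.log p := by ring
    linarith [he ▸ hmul]
  have h4 : ∑ p ∈ (N+1).primesBelow, ((N:ℝ) * (Real.log p / p) - Real.log p)
      ≤ N * Real.log N := (Finset.sum_le_sum hlow).trans (key.trans hfact_le)
  rw [Finset.sum_sub_distrib, ← Finset.mul_sum] at h4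
  have hth := theta_le N
  have hlog4 : Real.log 4 ≤ 2 := by
    rw [show (4:ℝ) = 2^2 by norm_num, Real.log_pow]
    have := Real.log_two_lt_d9
    push_cast
    nlinarith
  have h5 : (N:ℝ) * ∑ p ∈ (N+1).primesBelow, Real.log p / p ≤ (N:ℝ) * (Real.log N + 2) := by
    nlinarith [hth, hlog4, hNR.le]
  exact le_of_mul_le_mul_left h5 hNR

lemma telescope_Ico (f : ℕ → ℝ) : ∀ {a N : ℕ}, a ≤ N →
    ∑ m ∈ Finset.Ico a N, (f (m+1) - f m) = f N - f a := by
  intro a N h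
  induction N with
  | zero => interval_cases a; simp
  | succ N ih =>
    rcases Nat.lt_or_ge a (N+1) with h1 | h2
    · have ha : a ≤ N := Nat.lt_succ_iff.mp h1
      rw [Finset.sum_Ico_succ_top ha, ih ha]
      ring
    · have : a = N+1 := le_antisymm h h2
      subst this
      simp

lemma abel_id (c b : ℕ → ℝ) (a : ℕ) : ∀ N, a ≤ N →
    ∑ n ∈ Finset.Icc a N, c n * b n
      = (∑ n ∈ Finset.Icc a N, c n) * b N
        + ∑ m ∈ Finset.Ico a N, (∑ n ∈ Finset.Icc a m, c n) * (b m - b (m+1)) := by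
  intro N
  induction N with
  | zero => intro h; interval_cases a; simp
  | succ N ih =>
    intro h
    rcases Nat.lt_or_ge a (N+1) with h1 | h2
    · have ha : a ≤ N := Nat.lt_succ_iff.mp h1
      rw [Finset.sum_Icc_succ_top (Nat.le_succ_of_le ha),
        Finset.sum_Icc_succ_top (Nat.le_succ_of_le ha), Finset.sum_Ico_succ_top ha, ih ha]
      ring
    · have : a = N+1 := le_antisymm h h2
      subst this
      simp

lemma mertens2 (N : ℕ) (hN : 3 ≤ N) :
    ∑ p ∈ (N+1).primesBelow, (1:ℝ) / p ≤ Real.log (Real.log N) + 6 := by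
  classical
  set c : ℕ → ℝ := fun n => if n.Prime then Real.log n / n else 0 with hc
  set b : ℕ → ℝ := fun n => 1 / Real.log n with hb
  have hcnonneg : ∀ n, 0 ≤ c n := by
    intro n
    simp only [hc]
    split
    · rename_i hp
      have h1 : (1:ℝ) ≤ n := by exact_mod_cast hp.one_lt.le
      have := Real.log_nonneg h1
      positivity
    · exact le_refl 0
  have hT : ∀ m : ℕ, 1 ≤ m → ∑ n ∈ Finset.Icc 3 m, c n ≤ Real.log m + 2 := by
    intro m hm
    have h1 : ∑ n ∈ Finset.Icc 3 m, c n ≤ ∑ n ∈ Finset.range (m+1), c n := by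
      apply Finset.sum_le_sum_of_subset_of_nonneg
      · intro n hn
        simp only [Finset.mem_Icc] at hn
        simp [Finset.mem_range]; omega
      · intro n _ _; exact hcnonneg n
    have h2 : ∑ n ∈ Finset.range (m+1), c n = ∑ p ∈ (m+1).primesBelow, Real.log p / p := by
      rw [Nat.primesBelow, Finset.sum_filter]
    exact h1.trans (h2 ▸ mertens1 m hm)
  have hlog3 : (1:ℝ) < Real.log 3 := by
    have h1 : Real.exp 1 < 3 := by
      have := Real.exp_one_lt_d9
      nlinarith
    calc (1:ℝ) = Real.log (Real.exp 1) := (Real.log_exp 1).symm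
      _ < Real.log 3 := Real.log_lt_log (Real.exp_pos 1) h1
  -- split the sum
  have hsplit : ∑ p ∈ (N+1).primesBelow, (1:ℝ) / p
      = 1/2 + ∑ n ∈ Finset.Icc 3 N, c n * b n := by
    rw [Nat.primesBelow, Finset.sum_filter]
    have hr : Finset.range (N+1) = Finset.Ico 0 (N+1) := by
      rw [Finset.range_eq_Ico]
    rw [hr, ← Finset.sum_Ico_consecutive _ (by omega : (0:ℕ) ≤ 3) (by omega : 3 ≤ N+1)]
    have h03 : ∑ n ∈ Finset.Ico (0:ℕ) 3, (if n.Prime then (1:ℝ)/(n:ℝ) else 0) = 1/2 := by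
      rw [show Finset.Ico (0:ℕ) 3 = Finset.range 3 by rw [Finset.range_eq_Ico]]
      rw [Finset.sum_range_succ, Finset.sum_range_succ, Finset.sum_range_succ]
      norm_num
    rw [h03, Finset.Ico_add_one_right_eq_Icc]
    congr 1
    apply Finset.sum_congr rfl
    intro n hn
    simp only [Finset.mem_Icc] at hn
    have hlogn : Real.log n ≠ 0 := by
      have : Real.log 3 ≤ Real.log n := by
        apply Real.log_le_log (by norm_num)
        exact_mod_cast hn.1
      linarith
    simp only [hc, hb]
    split
    · rw [show Real.log (n:ℝ) / (n:ℝ) * (1/Real.log (n:ℝ))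
          = (Real.log (n:ℝ) / Real.log (n:ℝ)) * (1/(n:ℝ)) by ring, div_self hlogn, one_mul]
    · simp
  rw [hsplit, abel_id c b 3 N hN]
  have hbN : b N ≤ 1 := by
    have hlogN : (1:ℝ) ≤ Real.log N := by
      have : Real.log 3 ≤ Real.log N := by
        apply Real.log_le_log (by norm_num)
        exact_mod_cast hN
      linarith
    simp only [hb]
    rw [div_le_one (by linarith)]
    linarith
  have hlogN : (1:ℝ) ≤ Real.log N := by
    have : Real.log 3 ≤ Real.log N := by
      apply Real.log_le_log (by norm_num)
      exact_mod_cast hN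
    linarith
  have hterm1 : (∑ n ∈ Finset.Icc 3 N, c n) * b N ≤ 3 := by
    have hTN := hT N (by omega)
    have hTpos : 0 ≤ ∑ n ∈ Finset.Icc 3 N, c n := Finset.sum_nonneg fun n _ => hcnonneg n
    have hbNpos : 0 ≤ b N := by
      simp only [hb]; positivity
    calc (∑ n ∈ Finset.Icc 3 N, c n) * b N ≤ (Real.log N + 2) * b N :=
          mul_le_mul_of_nonneg_right hTN hbNpos
      _ = (Real.log N + 2) * (1 / Real.log N) := by simp only [hb]
      _ ≤ 3 := by
          rw [mul_one_div, div_le_iff₀ (by linarith)]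
          nlinarith
  -- the telescoping part
  set H : ℕ → ℝ := fun m => Real.log (Real.log m) - 2 / Real.log m with hH
  have hterm2 : ∑ m ∈ Finset.Ico 3 N, (∑ n ∈ Finset.Icc 3 m, c n) * (b m - b (m+1))
      ≤ Real.log (Real.log N) + 2 := by
    have hstep : ∀ m ∈ Finset.Ico 3 N,
        (∑ n ∈ Finset.Icc 3 m, c n) * (b m - b (m+1)) ≤ H (m+1) - H m := by
      intro m hm
      simp only [Finset.mem_Ico] at hm
      set u := Real.log m with hu
      set v := Real.log ((m+1 : ℕ) : ℝ) with hv
      have hu1 : 1 ≤ u := by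
        have : Real.log 3 ≤ Real.log m := by
          apply Real.log_le_log (by norm_num)
          exact_mod_cast hm.1
        linarith
      have huv : u ≤ v := by
        apply Real.log_le_log (by exact_mod_cast (by omega : 0 < m))
        exact_mod_cast Nat.le_succ m
      have hv1 : 1 ≤ v := hu1.trans huv
      have hTm := hT m (by omega)
      have hTpos : 0 ≤ ∑ n ∈ Finset.Icc 3 m, c n := Finset.sum_nonneg fun n _ => hcnonneg n
      have hbdiff : 0 ≤ b m - b (m+1) := by
        simp only [hb, ← hu, ← hv]
        rw [sub_nonneg]
        apply one_div_le_one_div_of_le (by linarith) huv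
      have h1 : (∑ n ∈ Finset.Icc 3 m, c n) * (b m - b (m+1)) ≤ (u + 2) * (b m - b (m+1)) :=
        mul_le_mul_of_nonneg_right hTm hbdiff
      have h2 : (u + 2) * (b m - b (m+1)) = (1 - u/v) + (2/u - 2/v) := by
        simp only [hb, ← hu, ← hv]
        field_simp
      have h3 : 1 - u/v ≤ Real.log v - Real.log u := by
        have h4 : Real.log (u/v) ≤ u/v - 1 := Real.log_le_sub_one_of_pos (by positivity)
        rw [Real.log_div (by linarith) (by linarith)] at h4
        linarith
      have hHm : H (m+1) - H m = (Real.log v - Real.log u) + (2/u - 2/v) := by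
        simp only [hH, ← hu, ← hv]
        ring
      rw [hHm]
      linarith
    calc ∑ m ∈ Finset.Ico 3 N, (∑ n ∈ Finset.Icc 3 m, c n) * (b m - b (m+1))
        ≤ ∑ m ∈ Finset.Ico 3 N, (H (m+1) - H m) := Finset.sum_le_sum hstep
      _ = H N - H 3 := telescope_Ico H hN
      _ ≤ Real.log (Real.log N) + 2 := by
          simp only [hH]
          have h5 : 0 ≤ Real.log (Real.log 3) := Real.log_nonneg (by linarith)
          have h6 : 2 / Real.log 3 ≤ 2 := by
            rw [div_le_iff₀ (by linarith)]
            linarith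
          have h7 : 0 ≤ 2 / Real.log N := by positivity
          push_cast
          linarith
  linarith

lemma telescope_Ico' (f : ℕ → ℝ) : ∀ {a N : ℕ}, a ≤ N →
    ∑ m ∈ Finset.Ico a N, (f (m+1) - f m) = f N - f a := by
  intro a N h
  induction N with
  | zero => interval_cases a; simp
  | succ N ih =>
    rcases Nat.lt_or_ge a (N+1) with h1 | h2
    · have ha : a ≤ N := Nat.lt_succ_iff.mp h1
      rw [Finset.sum_Ico_succ_top ha, ih ha]; ring
    · have : a = N+1 := le_antisymm h h2
      subst this; simp

lemma sum_le_sum_injOn {α β : Type*} [DecidableEq β] (emb : α → β) (s : Finset α) (t : Finset β)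
    (f : α → ℝ) (g : β → ℝ) (hmap : ∀ i ∈ s, emb i ∈ t)
    (hinj : ∀ i ∈ s, ∀ j ∈ s, emb i = emb j → i = j)
    (hval : ∀ i ∈ s, f i ≤ g (emb i)) (hg : ∀ b ∈ t, 0 ≤ g b) :
    ∑ i ∈ s, f i ≤ ∑ b ∈ t, g b := by
  calc ∑ i ∈ s, f i ≤ ∑ i ∈ s, g (emb i) := Finset.sum_le_sum hval
    _ = ∑ b ∈ s.image emb, g b := (Finset.sum_image hinj).symm
    _ ≤ ∑ b ∈ t, g b := Finset.sum_le_sum_of_subset_of_nonneg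
        (Finset.image_subset_iff.mpr hmap) (fun b hb _ => hg b hb)

noncomputable def Wfun (d : ℕ) : ℝ := 2^(Ω d - ω d) / d

lemma omega_le_Omega (n : ℕ) : ω n ≤ Ω n := by
  rw [cardDistinctFactors_apply, cardFactors_apply]
  exact List.Sublist.length_le (List.dedup_sublist _)

lemma omega_eq_card (n : ℕ) : ω n = n.primeFactors.card := by
  rw [cardDistinctFactors_apply, Nat.primeFactors, List.card_toFinset]

lemma Wfun_one : Wfun 1 = 1 := by
  simp [Wfun]

lemma Wfun_nonneg (d : ℕ) : 0 ≤ Wfun d := by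
  unfold Wfun; positivity

lemma Wfun_mul {u v : ℕ} (hu : u ≠ 0) (hv : v ≠ 0) (h : Nat.Coprime u v) :
    Wfun (u * v) = Wfun u * Wfun v := by
  unfold Wfun
  have hO : Ω (u * v) = Ω u + Ω v := cardFactors_mul hu hv
  have hw : ω (u * v) = ω u + ω v := by
    rw [omega_eq_card, omega_eq_card, omega_eq_card, Nat.primeFactors_mul hu hv,
      Finset.card_union_of_disjoint (Nat.Coprime.disjoint_primeFactors h)]
  have h1 : Ω (u*v) - ω (u*v) = (Ω u - ω u) + (Ω v - ω v) := by
    have := omega_le_Omega u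
    have := omega_le_Omega v
    omega
  rw [h1, pow_add]
  push_cast
  field_simp

lemma Wfun_prime_pow {p : ℕ} (hp : p.Prime) (a : ℕ) (ha : 1 ≤ a) :
    Wfun (p^a) = 2^(a-1) / (p:ℝ)^a := by
  unfold Wfun
  rw [cardFactors_apply_prime_pow hp, cardDistinctFactors_apply_prime_pow hp (by omega)]
  push_cast
  norm_num

lemma local_sum_le {p : ℕ} (hp : p.Prime) (hp3 : 3 ≤ p) (E : ℕ) :
    ∑ a ∈ Finset.range (E+1), Wfun (p^a) ≤ ((p:ℝ)-1)/((p:ℝ)-2) := by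
  have hpR : (3:ℝ) ≤ p := by exact_mod_cast hp3
  set r : ℝ := 2 / p with hr
  have hr0 : 0 ≤ r := by positivity
  have hr1 : r < 1 := by
    rw [hr, div_lt_one (by linarith)]; linarith
  have hgeom : ∑ i ∈ Finset.range E, r^i ≤ 1/(1-r) := by
    rw [geom_sum_eq (ne_of_lt hr1) E]
    have heq : (r^E - 1)/(r - 1) = (1 - r^E)/(1 - r) := by
      rw [← neg_div_neg_eq]; ring_nf
    rw [heq]
    have h0 : (0:ℝ) < 1 - r := by linarith
    rw [div_le_div_iff₀ h0 h0]
    nlinarith [mul_nonneg (pow_nonneg hr0 E) h0.le]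
  have hterm : ∀ i, Wfun (p^(i+1)) = (1/(p:ℝ)) * r^i := by
    intro i
    rw [Wfun_prime_pow hp (i+1) (by omega)]
    simp only [Nat.add_sub_cancel, hr]
    rw [div_pow, pow_succ]
    field_simp
  rw [Finset.sum_range_succ']
  have h1 : ∑ i ∈ Finset.range E, Wfun (p^(i+1)) ≤ 1/((p:ℝ)-2) := by
    calc ∑ i ∈ Finset.range E, Wfun (p^(i+1)) = (1/(p:ℝ)) * ∑ i ∈ Finset.range E, r^i := by
          rw [Finset.mul_sum]; exact Finset.sum_congr rfl fun i _ => hterm i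
      _ ≤ (1/(p:ℝ)) * (1/(1-r)) := by
          apply mul_le_mul_of_nonneg_left hgeom (by positivity)
      _ = 1/((p:ℝ)-2) := by
          have hp0 : (p:ℝ) ≠ 0 := by linarith
          have hp2 : (p:ℝ) - 2 ≠ 0 := by linarith
          have hp0 : (p:ℝ) ≠ 0 := by linarith
          have hp2 : (p:ℝ) - 2 ≠ 0 := by linarith
          rw [hr, div_mul_div_comm, one_mul]
          congr 1
          field_simp
  have h2 : Wfun (p^0) = 1 := by rw [pow_zero, Wfun_one]
  rw [h2]
  have h3 : 1 + 1/((p:ℝ)-2) = ((p:ℝ)-1)/((p:ℝ)-2) := by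
    have hp2 : (p:ℝ) - 2 ≠ 0 := by linarith
    field_simp
    ring
  linarith

lemma euler_prod_le (M : ℕ) : ∀ (Q : Finset ℕ), (∀ p ∈ Q, p.Prime ∧ 3 ≤ p) →
    ∑ d ∈ (Finset.Ioc 0 M).filter (fun d => d.primeFactors ⊆ Q), Wfun d
      ≤ ∏ p ∈ Q, ((p:ℝ)-1)/((p:ℝ)-2) := by
  intro Q
  induction Q using Finset.induction_on with
  | empty =>
    intro _
    rw [Finset.prod_empty]
    have hsub : (Finset.Ioc 0 M).filter (fun d => d.primeFactors ⊆ (∅ : Finset ℕ)) ⊆ {1} := by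
      intro d hd
      simp only [Finset.mem_filter, Finset.mem_Ioc, Finset.subset_empty] at hd
      have := Nat.primeFactors_eq_empty.mp hd.2
      simp only [Finset.mem_singleton]
      omega
    calc ∑ d ∈ (Finset.Ioc 0 M).filter (fun d => d.primeFactors ⊆ (∅ : Finset ℕ)), Wfun d
        ≤ ∑ d ∈ ({1} : Finset ℕ), Wfun d :=
          Finset.sum_le_sum_of_subset_of_nonneg hsub (fun d _ _ => Wfun_nonneg d)
      _ = 1 := by rw [Finset.sum_singleton, Wfun_one]
  | @insert p Q hpQ ih =>
    intro hQ
    have hp : p.Prime := (hQ p (Finset.mem_insert_self p Q)).1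
    have hp3 : 3 ≤ p := (hQ p (Finset.mem_insert_self p Q)).2
    have hQ' : ∀ q ∈ Q, q.Prime ∧ 3 ≤ q := fun q hq => hQ q (Finset.mem_insert_of_mem hq)
    set t2 := (Finset.Ioc 0 M).filter (fun d => d.primeFactors ⊆ Q) with ht2
    have key : ∑ d ∈ (Finset.Ioc 0 M).filter (fun d => d.primeFactors ⊆ insert p Q), Wfun d
        ≤ (∑ a ∈ Finset.range (M+1), Wfun (p^a)) * ∑ d ∈ t2, Wfun d := by
      rw [Finset.sum_mul_sum]
      rw [← Finset.sum_product']
      apply sum_le_sum_injOn (fun d => (d.factorization p, (d / p ^ d.factorization p)))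
      · -- hmap
        intro d hd
        simp only [Finset.mem_filter, Finset.mem_Ioc] at hd
        obtain ⟨⟨hd0, hdM⟩, hdP⟩ := hd
        have hd0' : d ≠ 0 := by omega
        rw [Finset.mem_product]
        constructor
        · rw [Finset.mem_range]
          have h1 : p ^ (d.factorization p) ∣ d := Nat.ordProj_dvd d p
          have h2 : p ^ (d.factorization p) ≤ d := Nat.le_of_dvd (by omega) h1
          have h3 : d.factorization p < p ^ (d.factorization p) :=
            Nat.lt_pow_self hp.one_lt
          omega
        · rw [ht2, Finset.mem_filter, Finset.mem_Ioc]
          refine ⟨⟨Nat.ordCompl_pos p hd0', ?_⟩, ?_⟩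
          · exact le_trans (Nat.le_of_dvd (by omega) (Nat.ordCompl_dvd d p)) hdM
          · intro q hq
            have hq1 := Nat.prime_of_mem_primeFactors hq
            have hq2 : q ∣ (d / p ^ d.factorization p) := Nat.dvd_of_mem_primeFactors hq
            have hq3 : q ∈ d.primeFactors := by
              rw [Nat.mem_primeFactors]
              exact ⟨hq1, hq2.trans (Nat.ordCompl_dvd d p), hd0'⟩
            have hq4 := hdP hq3
            rw [Finset.mem_insert] at hq4
            rcases hq4 with rfl | h
            · exact absurd hq2 (Nat.not_dvd_ordCompl hp hd0')
            · exact h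
      · -- injectivity
        intro d1 hd1 d2 hd2 heq
        have h1 : d1.factorization p = d2.factorization p := congrArg Prod.fst heq
        have h2 : d1 / p ^ d1.factorization p = d2 / p ^ d2.factorization p :=
          congrArg Prod.snd heq
        calc d1 = p ^ d1.factorization p * (d1 / p ^ d1.factorization p) :=
              (Nat.ordProj_mul_ordCompl_eq_self d1 p).symm
          _ = p ^ d2.factorization p * (d2 / p ^ d2.factorization p) := by rw [h2, h1]
          _ = d2 := Nat.ordProj_mul_ordCompl_eq_self d2 p
      · -- value
        intro d hd
        simp only [Finset.mem_filter, Finset.mem_Ioc] at hd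
        have hd0' : d ≠ 0 := by omega
        have hcop : Nat.Coprime (p ^ (d.factorization p)) ((d / p ^ d.factorization p)) :=
          Nat.Coprime.pow_left _ (Nat.coprime_ordCompl hp hd0')
        have hW := Wfun_mul (u := p ^ (d.factorization p)) (v := (d / p ^ d.factorization p))
          (pow_ne_zero _ hp.pos.ne') (Nat.ordCompl_pos p hd0').ne' hcop
        rw [Nat.ordProj_mul_ordCompl_eq_self d p] at hW
        rw [hW]
      · -- nonneg
        intro b _
        exact mul_nonneg (Wfun_nonneg _) (Wfun_nonneg _)
    calc ∑ d ∈ (Finset.Ioc 0 M).filter (fun d => d.primeFactors ⊆ insert p Q), Wfun d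
        ≤ (∑ a ∈ Finset.range (M+1), Wfun (p^a)) * ∑ d ∈ t2, Wfun d := key
      _ ≤ (((p:ℝ)-1)/((p:ℝ)-2)) * ∏ q ∈ Q, ((q:ℝ)-1)/((q:ℝ)-2) := by
          apply mul_le_mul (local_sum_le hp hp3 M) (ih hQ')
            (Finset.sum_nonneg fun d _ => Wfun_nonneg d)
          have h3p : (3:ℝ) ≤ p := by exact_mod_cast hp3
          apply div_nonneg <;> linarith
      _ = ∏ q ∈ insert p Q, ((q:ℝ)-1)/((q:ℝ)-2) := by rw [Finset.prod_insert hpQ]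

lemma prod_bound (y : ℝ) (hy : 2 ≤ y) :
    ∏ p ∈ ((Nat.floor y + 1).primesBelow).erase 2, ((p:ℝ)-1)/((p:ℝ)-2)
      ≤ 3000 * Real.log y := by
  have hy0 : 0 < y := by linarith
  have hlogy : Real.log 2 ≤ Real.log y := Real.log_le_log (by norm_num) hy
  have hlog2 : (0.6931471803 : ℝ) < Real.log 2 := Real.log_two_gt_d9
  set N := Nat.floor y with hNdef
  have hN2 : 2 ≤ N := Nat.le_floor (by exact_mod_cast hy)
  have hNy : (N:ℝ) ≤ y := Nat.floor_le hy0.le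
  have hmem : ∀ p ∈ (N+1).primesBelow.erase 2, p.Prime ∧ 3 ≤ p ∧ p ≤ N := by
    intro p hp
    have h1 := Finset.mem_erase.mp hp
    have h2 := Nat.prime_of_mem_primesBelow h1.2
    have h3 := Nat.lt_of_mem_primesBelow h1.2
    exact ⟨h2, by have := h2.two_le; omega, by omega⟩
  rcases Nat.lt_or_ge N 3 with hN3 | hN3
  · have he : (N+1).primesBelow.erase 2 = ∅ := by
      interval_cases N
      decide
    rw [he, Finset.prod_empty]
    nlinarith
  · have hfac_pos : ∀ p ∈ (N+1).primesBelow.erase 2, (0:ℝ) < ((p:ℝ)-1)/((p:ℝ)-2) := by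
      intro p hp
      obtain ⟨_, h3, _⟩ := hmem p hp
      have : (3:ℝ) ≤ p := by exact_mod_cast h3
      apply div_pos <;> linarith
    have hexp : ∏ p ∈ (N+1).primesBelow.erase 2, ((p:ℝ)-1)/((p:ℝ)-2)
        = Real.exp (∑ p ∈ (N+1).primesBelow.erase 2, Real.log (((p:ℝ)-1)/((p:ℝ)-2))) := by
      rw [Real.exp_sum]
      exact Finset.prod_congr rfl fun p hp => (Real.exp_log (hfac_pos p hp)).symm
    have hterm : ∀ p ∈ (N+1).primesBelow.erase 2,
        Real.log (((p:ℝ)-1)/((p:ℝ)-2))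
          ≤ 1/(p:ℝ) + (2/((p-2 : ℕ):ℝ) - 2/(((p-2 : ℕ):ℝ)+1)) := by
      intro p hp
      obtain ⟨hpp, h3, hpN⟩ := hmem p hp
      have h3R : (3:ℝ) ≤ p := by exact_mod_cast h3
      have hm : ((p-2 : ℕ):ℝ) = (p:ℝ) - 2 := by
        push_cast [Nat.cast_sub (by omega : 2 ≤ p)]
        ring
      rw [hm]
      have h1 : Real.log (((p:ℝ)-1)/((p:ℝ)-2)) ≤ 1/((p:ℝ)-2) := by
        have h2 := Real.log_le_sub_one_of_pos (hfac_pos p hp)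
        have hp2' : (p:ℝ) - 2 ≠ 0 := by linarith
        have h4 : ((p:ℝ)-1)/((p:ℝ)-2) - 1 = 1/((p:ℝ)-2) := by
          rw [div_sub_one hp2']
          congr 1
          ring
        linarith
      have h5 : 1/((p:ℝ)-2) ≤ 1/(p:ℝ) + (2/((p:ℝ)-2) - 2/(((p:ℝ)-2)+1)) := by
        have hp0 : (p:ℝ) ≠ 0 := by linarith
        have hp1 : (p:ℝ) - 1 ≠ 0 := by linarith
        have hp2 : (p:ℝ) - 2 ≠ 0 := by linarith
        have e1 : 1/((p:ℝ)-2) - 1/(p:ℝ) = 2/((p:ℝ)*((p:ℝ)-2)) := by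
          rw [div_sub_div _ _ hp2 hp0, div_eq_div_iff (by positivity) ?_]
          · ring
          · nlinarith
        have e2 : 2/((p:ℝ)-2) - 2/(((p:ℝ)-2)+1) = 2/(((p:ℝ)-2)*((p:ℝ)-1)) := by
          rw [show ((p:ℝ)-2)+1 = (p:ℝ)-1 by ring]
          rw [div_sub_div _ _ hp2 hp1, div_eq_div_iff ?_ ?_]
          · ring
          · nlinarith
          · nlinarith
        have e3 : 2/((p:ℝ)*((p:ℝ)-2)) ≤ 2/(((p:ℝ)-2)*((p:ℝ)-1)) := by
          apply div_le_div_of_nonneg_left (by norm_num) (by nlinarith) (by nlinarith)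
        linarith
      linarith
    have hsum1 : ∑ p ∈ (N+1).primesBelow.erase 2, 1/(p:ℝ)
        ≤ Real.log (Real.log N) + 6 := by
      refine le_trans ?_ (mertens2 N hN3)
      apply Finset.sum_le_sum_of_subset_of_nonneg (Finset.erase_subset _ _)
      intro p _ _
      positivity
    have hsum2 : ∑ p ∈ (N+1).primesBelow.erase 2, (2/((p-2 : ℕ):ℝ) - 2/(((p-2 : ℕ):ℝ)+1))
        ≤ 2 := by
      have step : ∑ p ∈ (N+1).primesBelow.erase 2, (2/((p-2 : ℕ):ℝ) - 2/(((p-2 : ℕ):ℝ)+1))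
          ≤ ∑ m ∈ Finset.Ico 1 (N+1), (2/(m:ℝ) - 2/((m:ℝ)+1)) := by
        apply sum_le_sum_injOn (fun p => p - 2)
        · intro p hp
          obtain ⟨_, h3, hpN⟩ := hmem p hp
          rw [Finset.mem_Ico]
          omega
        · intro p hp q hq h
          obtain ⟨_, h3, _⟩ := hmem p hp
          obtain ⟨_, h3', _⟩ := hmem q hq
          omega
        · intro p hp
          exact le_rfl
        · intro m hm
          rw [Finset.mem_Ico] at hm
          have h1 : (1:ℝ) ≤ m := by exact_mod_cast hm.1
          rw [sub_nonneg]
          apply div_le_div_of_nonneg_left (by norm_num) (by linarith) (by linarith)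
      refine step.trans ?_
      have htel := telescope_Ico' (fun m : ℕ => -2/(m:ℝ)) (by omega : 1 ≤ N+1)
      have heq : ∑ m ∈ Finset.Ico 1 (N+1), (2/(m:ℝ) - 2/((m:ℝ)+1))
          = ∑ m ∈ Finset.Ico 1 (N+1),
              ((fun m : ℕ => -2/(m:ℝ)) (m+1) - (fun m : ℕ => -2/(m:ℝ)) m) := by
        apply Finset.sum_congr rfl
        intro m hm
        push_cast
        ring
      rw [heq, htel]
      have h9 : (0:ℝ) ≤ 2/((N:ℝ)+1) := by positivity
      have h10 : (-2:ℝ)/((N:ℝ)+1) = -(2/((N:ℝ)+1)) := by ring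
      push_cast
      rw [h10]
      norm_num
      linarith
    have hlogN1 : (1:ℝ) < (N:ℝ) := by
      have : (3:ℕ) ≤ N := hN3
      exact_mod_cast by omega
    have hlogNpos : 0 < Real.log N := Real.log_pos hlogN1
    have hsum : ∑ p ∈ (N+1).primesBelow.erase 2, Real.log (((p:ℝ)-1)/((p:ℝ)-2))
        ≤ Real.log (Real.log N) + 8 := by
      calc ∑ p ∈ (N+1).primesBelow.erase 2, Real.log (((p:ℝ)-1)/((p:ℝ)-2))
          ≤ ∑ p ∈ (N+1).primesBelow.erase 2,
              (1/(p:ℝ) + (2/((p-2 : ℕ):ℝ) - 2/(((p-2 : ℕ):ℝ)+1))) := Finset.sum_le_sum hterm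
        _ = (∑ p ∈ (N+1).primesBelow.erase 2, 1/(p:ℝ))
            + ∑ p ∈ (N+1).primesBelow.erase 2, (2/((p-2 : ℕ):ℝ) - 2/(((p-2 : ℕ):ℝ)+1)) :=
            Finset.sum_add_distrib
        _ ≤ (Real.log (Real.log N) + 6) + 2 := add_le_add hsum1 hsum2
        _ = Real.log (Real.log N) + 8 := by ring
    rw [hexp]
    calc Real.exp (∑ p ∈ (N+1).primesBelow.erase 2, Real.log (((p:ℝ)-1)/((p:ℝ)-2)))
        ≤ Real.exp (Real.log (Real.log N) + 8) := Real.exp_le_exp.mpr hsum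
      _ = Real.log N * Real.exp 8 := by
          rw [Real.exp_add, Real.exp_log hlogNpos]
      _ ≤ 3000 * Real.log y := by
          have hexp8 : Real.exp 8 ≤ 3000 := by
            have h1 : Real.exp 8 = (Real.exp 1)^(8:ℕ) := by
              rw [← Real.exp_nat_mul]
              norm_num
            have h2 := Real.exp_one_lt_d9
            rw [h1]
            calc (Real.exp 1)^(8:ℕ) ≤ (2.7182818286:ℝ)^(8:ℕ) := by
                  apply pow_le_pow_left₀ (Real.exp_pos 1).le h2.le
              _ ≤ 3000 := by norm_num
          have hlogNy : Real.log N ≤ Real.log y := Real.log_le_log (by linarith) hNy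
          nlinarith


lemma BOB_zero (y : ℝ) : BigOmegaBelow 0 y = 0 := by simp [BigOmegaBelow]

lemma BOB_one (y : ℝ) : BigOmegaBelow 1 y = 0 := by simp [BigOmegaBelow]

lemma BOB_mul {a b : ℕ} (y : ℝ) (ha : a ≠ 0) (hb : b ≠ 0) (h : Nat.Coprime a b) :
    BigOmegaBelow (a*b) y = BigOmegaBelow a y + BigOmegaBelow b y := by
  unfold BigOmegaBelow
  rw [Nat.primeFactors_mul ha hb, Finset.filter_union,
    Finset.sum_union (Finset.disjoint_filter_filter (Nat.Coprime.disjoint_primeFactors h))]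
  congr 1
  · apply Finset.sum_congr rfl
    intro p hp
    have hp1 : p ∈ a.primeFactors := Finset.mem_of_mem_filter p hp
    have hp2 : p ∉ b.primeFactors :=
      Finset.disjoint_left.mp (Nat.Coprime.disjoint_primeFactors h) hp1
    have hb0 : b.factorization p = 0 := by
      rw [← Finsupp.notMem_support_iff, Nat.support_factorization]
      exact hp2
    rw [Nat.factorization_mul ha hb]
    simp [hb0]
  · apply Finset.sum_congr rfl
    intro p hp
    have hp1 : p ∈ b.primeFactors := Finset.mem_of_mem_filter p hp
    have hp2 : p ∉ a.primeFactors :=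
      Finset.disjoint_right.mp (Nat.Coprime.disjoint_primeFactors h) hp1
    have ha0 : a.factorization p = 0 := by
      rw [← Finsupp.notMem_support_iff, Nat.support_factorization]
      exact hp2
    rw [Nat.factorization_mul ha hb]
    simp [ha0]

lemma BOB_prime_pow {p : ℕ} (hp : p.Prime) (y : ℝ) (i : ℕ) :
    BigOmegaBelow (p^i) y = if (p:ℝ) ≤ y then i else 0 := by
  rcases Nat.eq_zero_or_pos i with rfl | hi
  · simp [BigOmegaBelow]
  · unfold BigOmegaBelow
    rw [Nat.primeFactors_prime_pow (by omega) hp]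
    by_cases hpy : (p:ℝ) ≤ y
    · rw [if_pos hpy, Finset.filter_singleton, if_pos hpy, Finset.sum_singleton,
        hp.factorization_pow]
      simp
    · rw [if_neg hpy, Finset.filter_singleton, if_neg hpy]
      simp

noncomputable def Fof (y : ℝ) : ArithmeticFunction ℕ :=
  ⟨fun n => if n = 0 then 0 else 2^(BigOmegaBelow n y), by simp⟩

noncomputable def Gof (y : ℝ) : ArithmeticFunction ℕ :=
  ⟨fun d => if d = 0 then 0 else
    (if ∀ p ∈ d.primeFactors, (p:ℝ) ≤ y then 2^(Ω d - ω d) else 0), by simp⟩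

lemma Fof_apply (y : ℝ) {n : ℕ} (hn : n ≠ 0) : Fof y n = 2^(BigOmegaBelow n y) := by
  simp [Fof, hn]

lemma Gof_apply (y : ℝ) {d : ℕ} (hd : d ≠ 0) :
    Gof y d = if ∀ p ∈ d.primeFactors, (p:ℝ) ≤ y then 2^(Ω d - ω d) else 0 := by
  simp [Gof, hd]

lemma omega_le_Omega' (n : ℕ) : ω n ≤ Ω n := by
  rw [cardDistinctFactors_apply, cardFactors_apply]
  exact List.Sublist.length_le (List.dedup_sublist _)

lemma omega_eq_card' (n : ℕ) : ω n = n.primeFactors.card := by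
  rw [cardDistinctFactors_apply, Nat.primeFactors, List.card_toFinset]

lemma Fof_mult (y : ℝ) : (Fof y).IsMultiplicative := by
  constructor
  · rw [Fof_apply y one_ne_zero, BOB_one, pow_zero]
  · intro m n h
    rcases eq_or_ne m 0 with rfl | hm
    · have : n = 1 := Nat.coprime_zero_left n |>.mp h
      subst this
      simp [Fof]
    rcases eq_or_ne n 0 with rfl | hn
    · have : m = 1 := Nat.coprime_zero_right m |>.mp h
      subst this
      simp [Fof]
    rw [Fof_apply y (Nat.mul_ne_zero hm hn), Fof_apply y hm, Fof_apply y hn,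
      BOB_mul y hm hn h, pow_add]

lemma Gof_mult (y : ℝ) : (Gof y).IsMultiplicative := by
  constructor
  · rw [Gof_apply y one_ne_zero]
    simp
  · intro m n h
    rcases eq_or_ne m 0 with rfl | hm
    · have : n = 1 := Nat.coprime_zero_left n |>.mp h
      subst this
      simp [Gof]
    rcases eq_or_ne n 0 with rfl | hn
    · have : m = 1 := Nat.coprime_zero_right m |>.mp h
      subst this
      simp [Gof]
    rw [Gof_apply y (Nat.mul_ne_zero hm hn), Gof_apply y hm, Gof_apply y hn]
    have hpf : (m*n).primeFactors = m.primeFactors ∪ n.primeFactors :=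
      Nat.primeFactors_mul hm hn
    by_cases hsm : ∀ p ∈ m.primeFactors, (p:ℝ) ≤ y
    · by_cases hsn : ∀ p ∈ n.primeFactors, (p:ℝ) ≤ y
      · have hmn : ∀ p ∈ (m*n).primeFactors, (p:ℝ) ≤ y := by
          rw [hpf]
          intro p hp
          rcases Finset.mem_union.mp hp with h1 | h1
          · exact hsm p h1
          · exact hsn p h1
        rw [if_pos hmn, if_pos hsm, if_pos hsn]
        have hO : Ω (m * n) = Ω m + Ω n := cardFactors_mul hm hn
        have hw : ω (m * n) = ω m + ω n := by
          rw [omega_eq_card', omega_eq_card', omega_eq_card', hpf,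
            Finset.card_union_of_disjoint (Nat.Coprime.disjoint_primeFactors h)]
        have h1 : Ω (m*n) - ω (m*n) = (Ω m - ω m) + (Ω n - ω n) := by
          have := omega_le_Omega' m
          have := omega_le_Omega' n
          omega
        rw [h1, pow_add]
      · have hmn : ¬ ∀ p ∈ (m*n).primeFactors, (p:ℝ) ≤ y := by
          rw [hpf]
          push_neg
          push_neg at hsn
          obtain ⟨p, hp1, hp2⟩ := hsn
          exact ⟨p, Finset.mem_union_right _ hp1, hp2⟩
        rw [if_neg hmn, if_neg hsn, mul_zero]
    · have hmn : ¬ ∀ p ∈ (m*n).primeFactors, (p:ℝ) ≤ y := by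
        rw [hpf]
        push_neg
        push_neg at hsm
        obtain ⟨p, hp1, hp2⟩ := hsm
        exact ⟨p, Finset.mem_union_left _ hp1, hp2⟩
      rw [if_neg hmn, if_neg hsm, zero_mul]

lemma sum_ite_pow (i : ℕ) :
    ∑ j ∈ Finset.range (i+1), (if j = 0 then 1 else 2^(j-1)) = 2^i := by
  induction i with
  | zero => simp
  | succ i ih =>
    rw [Finset.sum_range_succ, ih]
    have : (i+1) ≠ 0 := by omega
    rw [if_neg this]
    simp [pow_succ]
    omega

lemma F_eq_zeta_mul_G (y : ℝ) : Fof y = ζ * Gof y := by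
  rw [ArithmeticFunction.IsMultiplicative.eq_iff_eq_on_prime_powers _ (Fof_mult y) _ (isMultiplicative_zeta.mul (Gof_mult y))]
  intro p i hp
  rw [zeta_mul_apply, Nat.sum_divisors_prime_pow hp]
  have hGpj : ∀ j : ℕ, Gof y (p^j)
      = if (p:ℝ) ≤ y then (if j = 0 then 1 else 2^(j-1)) else (if j = 0 then 1 else 0) := by
    intro j
    rcases Nat.eq_zero_or_pos j with rfl | hj
    · simp [Gof]
    · rw [Gof_apply y (pow_ne_zero _ hp.pos.ne')]
      rw [Nat.primeFactors_prime_pow (by omega) hp]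
      have hj0 : j ≠ 0 := by omega
      by_cases hpy : (p:ℝ) ≤ y
      · rw [if_pos hpy, if_pos (by simpa using hpy), if_neg hj0,
          cardFactors_apply_prime_pow hp, cardDistinctFactors_apply_prime_pow hp hj0]
      · rw [if_neg hpy, if_neg (by simpa using hpy), if_neg hj0]
  rw [Fof_apply y (pow_ne_zero _ hp.pos.ne'), BOB_prime_pow hp y i]
  by_cases hpy : (p:ℝ) ≤ y
  · rw [if_pos hpy]
    calc (2:ℕ)^i = ∑ j ∈ Finset.range (i+1), (if j = 0 then 1 else 2^(j-1)) :=
          (sum_ite_pow i).symm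
      _ = ∑ j ∈ Finset.range (i+1), Gof y (p^j) := by
          apply Finset.sum_congr rfl
          intro j _
          rw [hGpj j, if_pos hpy]
  · rw [if_neg hpy, pow_zero]
    have : ∀ j ∈ Finset.range (i+1), Gof y (p^j) = if j = 0 then 1 else 0 := by
      intro j _
      rw [hGpj j, if_neg hpy]
    rw [Finset.sum_congr rfl this, Finset.sum_ite_eq' (Finset.range (i+1)) 0 (fun _ => 1)]
    simp

lemma two_pow_BOB_eq (y : ℝ) {m : ℕ} (hm : m ≠ 0) :
    (2:ℕ)^(BigOmegaBelow m y) = ∑ d ∈ m.divisors, Gof y d := by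
  have h1 : Fof y m = (ζ * Gof y) m := by rw [F_eq_zeta_mul_G]
  rw [Fof_apply y hm] at h1
  rw [h1, zeta_mul_apply]

lemma odd_of_dvd {d m : ℕ} (h : d ∣ m) (hm : Odd m) : Odd d := by
  rcases Nat.even_or_odd d with he | ho
  · exfalso
    have h2 : Even m := even_iff_two_dvd.mpr ((even_iff_two_dvd.mp he).trans h)
    exact (Nat.not_even_iff_odd.mpr hm) h2
  · exact ho

lemma smooth_sum_bound (M : ℕ) (y : ℝ) (hy : 2 ≤ y) :
    ∑ d ∈ (Finset.Ioc 0 M).filter (fun d : ℕ => Odd d ∧ ∀ p ∈ d.primeFactors, (p:ℝ) ≤ y), Wfun d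
      ≤ 3000 * Real.log y := by
  set Q := ((Nat.floor y + 1).primesBelow).erase 2 with hQ
  have hQprime : ∀ p ∈ Q, p.Prime ∧ 3 ≤ p := by
    intro p hp
    have h1 := Finset.mem_erase.mp hp
    have h2 := Nat.prime_of_mem_primesBelow h1.2
    exact ⟨h2, by have := h2.two_le; have := h1.1; omega⟩
  have hsub : (Finset.Ioc 0 M).filter (fun d : ℕ => Odd d ∧ ∀ p ∈ d.primeFactors, (p:ℝ) ≤ y)
      ⊆ (Finset.Ioc 0 M).filter (fun d => d.primeFactors ⊆ Q) := by
    apply Finset.monotone_filter_right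
    intro d _ hd
    intro p hp
    have hpp := Nat.prime_of_mem_primeFactors hp
    have hpd := Nat.dvd_of_mem_primeFactors hp
    have hpodd : Odd p := odd_of_dvd hpd hd.1
    rw [hQ, Finset.mem_erase]
    constructor
    · rintro rfl
      exact (by norm_num : ¬ Odd 2) hpodd
    · rw [Nat.mem_primesBelow]
      refine ⟨?_, hpp⟩
      have : p ≤ Nat.floor y := Nat.le_floor (hd.2 p hp)
      omega
  calc ∑ d ∈ (Finset.Ioc 0 M).filter
        (fun d : ℕ => Odd d ∧ ∀ p ∈ d.primeFactors, (p:ℝ) ≤ y), Wfun d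
      ≤ ∑ d ∈ (Finset.Ioc 0 M).filter (fun d => d.primeFactors ⊆ Q), Wfun d :=
        Finset.sum_le_sum_of_subset_of_nonneg hsub (fun d _ _ => Wfun_nonneg d)
    _ ≤ ∏ p ∈ Q, ((p:ℝ)-1)/((p:ℝ)-2) := euler_prod_le M Q hQprime
    _ ≤ 3000 * Real.log y := prod_bound y hy

lemma key_sum (M : ℕ) (y : ℝ) (hy : 2 ≤ y) :
    ∑ m ∈ (Finset.Ioc 0 M).filter (fun m : ℕ => Odd m), (2:ℝ)^(BigOmegaBelow m y)
      ≤ (M:ℝ) * (3000 * Real.log y) := by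
  classical
  set A := (Finset.Ioc 0 M).filter (fun m : ℕ => Odd m) with hA
  set Dg := (Finset.Ioc 0 M).filter
    (fun d : ℕ => Odd d ∧ ∀ p ∈ d.primeFactors, (p:ℝ) ≤ y) with hDg
  have h1 : ∀ m ∈ A, (2:ℝ)^(BigOmegaBelow m y) = ∑ d ∈ m.divisors, ((Gof y d : ℕ) : ℝ) := by
    intro m hm
    have hm0 : m ≠ 0 := by
      simp only [hA, Finset.mem_filter, Finset.mem_Ioc] at hm
      omega
    exact_mod_cast two_pow_BOB_eq y hm0
  have h2 : ∀ m ∈ A, ∑ d ∈ m.divisors, ((Gof y d : ℕ):ℝ)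
      = ∑ d ∈ Finset.Ioc 0 M, (if d ∣ m then ((Gof y d : ℕ):ℝ) else 0) := by
    intro m hm
    simp only [hA, Finset.mem_filter, Finset.mem_Ioc] at hm
    rw [← Finset.sum_filter]
    congr 1
    ext d
    simp only [Nat.mem_divisors, Finset.mem_filter, Finset.mem_Ioc]
    constructor
    · rintro ⟨hdm, -⟩
      have hd0 : 0 < d := Nat.pos_of_dvd_of_pos hdm (by omega)
      exact ⟨⟨hd0, (Nat.le_of_dvd (by omega) hdm).trans hm.1.2⟩, hdm⟩
    · rintro ⟨-, hdm⟩
      exact ⟨hdm, by omega⟩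
  have h3 : ∑ m ∈ A, ∑ d ∈ Finset.Ioc 0 M, (if d ∣ m then ((Gof y d : ℕ):ℝ) else 0)
      = ∑ d ∈ Finset.Ioc 0 M,
          ((Gof y d : ℕ):ℝ) * (((A.filter (fun m => d ∣ m)).card : ℕ) : ℝ) := by
    rw [Finset.sum_comm]
    apply Finset.sum_congr rfl
    intro d _
    rw [← Finset.sum_filter, Finset.sum_const, nsmul_eq_mul]
    ring
  have h4 : ∑ d ∈ Finset.Ioc 0 M,
        ((Gof y d : ℕ):ℝ) * (((A.filter (fun m => d ∣ m)).card : ℕ) : ℝ)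
      = ∑ d ∈ Dg, ((Gof y d : ℕ):ℝ) * (((A.filter (fun m => d ∣ m)).card : ℕ) : ℝ) := by
    rw [hDg]
    symm
    apply Finset.sum_subset (Finset.filter_subset _ _)
    intro d hd hnd
    simp only [Finset.mem_filter, Finset.mem_Ioc] at hnd
    rw [Finset.mem_Ioc] at hd
    by_cases hodd : Odd d
    · have hns : ¬ ∀ p ∈ d.primeFactors, (p:ℝ) ≤ y := by tauto
      have hG0 : Gof y d = 0 := by
        rw [Gof_apply y (by omega : d ≠ 0), if_neg hns]
      rw [hG0]
      simp
    · have hf : A.filter (fun m => d ∣ m) = ∅ := by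
        rw [Finset.filter_eq_empty_iff]
        intro m hm
        simp only [hA, Finset.mem_filter] at hm
        intro hdvd
        exact hodd (odd_of_dvd hdvd hm.2)
      rw [hf]
      simp
  have h6 : ∀ d ∈ Dg, ((Gof y d : ℕ):ℝ) * (((A.filter (fun m => d ∣ m)).card : ℕ) : ℝ)
      ≤ (M:ℝ) * Wfun d := by
    intro d hd
    simp only [hDg, Finset.mem_filter, Finset.mem_Ioc] at hd
    have hd0 : d ≠ 0 := by omega
    have hdR : (0:ℝ) < d := by
      have : 0 < d := hd.1.1
      exact_mod_cast this
    have hG : Gof y d = 2^(Ω d - ω d) := by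
      rw [Gof_apply y hd0, if_pos hd.2.2]
    have h5 : (((A.filter (fun m => d ∣ m)).card : ℕ) : ℝ) ≤ (M:ℝ)/d := by
      have hsub : A.filter (fun m => d ∣ m) ⊆ (Finset.Ioc 0 M).filter (fun m => d ∣ m) :=
        Finset.filter_subset_filter _ (Finset.filter_subset _ _)
      have hcard : ((Finset.Ioc 0 M).filter (fun m => d ∣ m)).card = M / d := by
        have := Nat.Ioc_filter_dvd_card_eq_div M d
        convert this using 2
      calc (((A.filter (fun m => d ∣ m)).card : ℕ) : ℝ)
          ≤ ((M / d : ℕ) : ℝ) := by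
            exact_mod_cast (Finset.card_le_card hsub).trans (le_of_eq hcard)
        _ ≤ (M:ℝ)/d := Nat.cast_div_le
    calc ((Gof y d : ℕ):ℝ) * (((A.filter (fun m => d ∣ m)).card : ℕ) : ℝ)
        ≤ ((Gof y d : ℕ):ℝ) * ((M:ℝ)/d) := by
          apply mul_le_mul_of_nonneg_left h5 (by positivity)
      _ = (M:ℝ) * Wfun d := by
          rw [hG, Wfun]
          push_cast
          field_simp
  calc ∑ m ∈ A, (2:ℝ)^(BigOmegaBelow m y)
      = ∑ m ∈ A, ∑ d ∈ Finset.Ioc 0 M, (if d ∣ m then ((Gof y d : ℕ):ℝ) else 0) := by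
        apply Finset.sum_congr rfl
        intro m hm
        rw [h1 m hm, h2 m hm]
    _ = ∑ d ∈ Dg, ((Gof y d : ℕ):ℝ) * (((A.filter (fun m => d ∣ m)).card : ℕ) : ℝ) := by
        rw [h3, h4]
    _ ≤ ∑ d ∈ Dg, (M:ℝ) * Wfun d := Finset.sum_le_sum h6
    _ = (M:ℝ) * ∑ d ∈ Dg, Wfun d := by rw [Finset.mul_sum]
    _ ≤ (M:ℝ) * (3000 * Real.log y) := by
        apply mul_le_mul_of_nonneg_left _ (Nat.cast_nonneg M)
        rw [hDg]
        exact smooth_sum_bound M y hy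

/-- There is `C > 0` such that for all `x, y ≥ 2` and integers `k ≥ 1`, the number of
`n ≤ x` with `Ω(n; y) ≥ k` is at most `C (k/2^k) x log y`. -/
theorem count_large_BigOmegaBelow :
    ∃ C : ℝ, 0 < C ∧ ∀ x y : ℝ, ∀ k : ℕ, 2 ≤ x → 2 ≤ y → 1 ≤ k →
      ({n : ℕ | (n : ℝ) ≤ x ∧ k ≤ BigOmegaBelow n y}.ncard : ℝ)
        ≤ C * ((k : ℝ) / 2 ^ k) * x * Real.log y := by
  classical
  refine ⟨4000, by norm_num, ?_⟩
  intro x y k hx hy hk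
  have hx0 : (0:ℝ) < x := by linarith
  have hlog2 := Real.log_two_gt_d9
  have hlogy : Real.log 2 ≤ Real.log y := Real.log_le_log two_pos hy
  have hlogy0 : (0:ℝ) < Real.log y := by linarith
  set N := Nat.floor x with hN
  have hNx : (N:ℝ) ≤ x := Nat.floor_le hx0.le
  have hN2 : 2 ≤ N := Nat.le_floor (by exact_mod_cast hx)
  set A := (Finset.Ioc 0 N).filter (fun n => k ≤ BigOmegaBelow n y) with hA
  have hset : {n : ℕ | (n : ℝ) ≤ x ∧ k ≤ BigOmegaBelow n y} = ↑A := by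
    ext n
    simp only [hA, Finset.coe_filter, Finset.mem_Ioc, Set.mem_setOf_eq]
    constructor
    · rintro ⟨h1, h2⟩
      have hn0 : 0 < n := by
        rcases Nat.eq_zero_or_pos n with rfl | h
        · rw [BOB_zero] at h2; omega
        · exact h
      exact ⟨⟨hn0, Nat.le_floor h1⟩, h2⟩
    · rintro ⟨⟨h0, h1⟩, h2⟩
      refine ⟨?_, h2⟩
      calc (n:ℝ) ≤ (N:ℝ) := by exact_mod_cast h1
        _ ≤ x := hNx
  rw [hset, Set.ncard_coe_finset]
  set B : ℕ → Finset ℕ := fun a => A.filter (fun n => n.factorization 2 = a) with hB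
  set Cs := A.filter (fun n => 2^k ∣ n) with hCs
  have hcover : A ⊆ (Finset.range k).biUnion B ∪ Cs := by
    intro n hn
    rcases Nat.lt_or_ge (n.factorization 2) k with hlt | hge
    · exact Finset.mem_union_left _ (Finset.mem_biUnion.mpr
        ⟨n.factorization 2, Finset.mem_range.mpr hlt, Finset.mem_filter.mpr ⟨hn, rfl⟩⟩)
    · exact Finset.mem_union_right _ (Finset.mem_filter.mpr
        ⟨hn, dvd_trans (pow_dvd_pow 2 hge) (Nat.ordProj_dvd n 2)⟩)
  have hcard : (A.card : ℝ) ≤ (∑ a ∈ Finset.range k, ((B a).card : ℝ)) + (Cs.card : ℝ) := by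
    have h1 : A.card ≤ (∑ a ∈ Finset.range k, (B a).card) + Cs.card := by
      calc A.card ≤ ((Finset.range k).biUnion B ∪ Cs).card := Finset.card_le_card hcover
        _ ≤ ((Finset.range k).biUnion B).card + Cs.card := Finset.card_union_le _ _
        _ ≤ (∑ a ∈ Finset.range k, (B a).card) + Cs.card := by
            exact Nat.add_le_add_right (Finset.card_biUnion_le) _
    calc (A.card : ℝ) ≤ (((∑ a ∈ Finset.range k, (B a).card) + Cs.card : ℕ) : ℝ) := by
          exact_mod_cast h1
      _ = (∑ a ∈ Finset.range k, ((B a).card : ℝ)) + (Cs.card : ℝ) := by push_cast; ring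
  have hCsbound : (Cs.card : ℝ) ≤ x / 2^k := by
    have hsub : Cs ⊆ (Finset.Ioc 0 N).filter (fun n => 2^k ∣ n) :=
      Finset.filter_subset_filter _ (Finset.filter_subset _ _)
    have h1 : Cs.card ≤ N / 2^k := by
      calc Cs.card ≤ ((Finset.Ioc 0 N).filter (fun n => 2^k ∣ n)).card :=
            Finset.card_le_card hsub
        _ = N / 2^k := Nat.Ioc_filter_dvd_card_eq_div N (2^k)
    calc (Cs.card : ℝ) ≤ ((N / 2^k : ℕ) : ℝ) := by exact_mod_cast h1
      _ ≤ (N:ℝ) / (2:ℝ)^k := by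
          have := Nat.cast_div_le (α := ℝ) (m := N) (n := 2^k)
          push_cast at this
          exact this
      _ ≤ x / 2^k := by gcongr
  have hBbound : ∀ a ∈ Finset.range k, ((B a).card : ℝ) ≤ 3000 * x * Real.log y / 2^k := by
    intro a ha
    rw [Finset.mem_range] at ha
    set M := N / 2^a with hM
    set D := (Finset.Ioc 0 M).filter (fun m : ℕ => Odd m ∧ (k - a) ≤ BigOmegaBelow m y) with hD
    have hkey : ∀ n ∈ B a, 2^a * (n / 2^a) = n := by
      intro n hn
      simp only [hB, Finset.mem_filter] at hn
      conv_rhs => rw [← Nat.ordProj_mul_ordCompl_eq_self n 2]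
      rw [hn.2]
    have hinj : (B a).card ≤ D.card := by
      apply Finset.card_le_card_of_injOn (fun n => n / 2^a)
      · intro n hn
        have heq := hkey n hn
        simp only [hB, hA, Finset.mem_coe, Finset.mem_filter, Finset.mem_Ioc] at hn
        obtain ⟨⟨⟨hn0, hnN⟩, hkn⟩, hfa⟩ := hn
        have hn0' : n ≠ 0 := by omega
        have hm0 : 0 < n / 2^a := by
          rcases Nat.eq_zero_or_pos (n / 2^a) with h | h
          · rw [h, mul_zero] at heq; omega
          · exact h
        have hmM : n / 2^a ≤ M := by
          rw [hM]
          exact Nat.div_le_div_right hnN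
        have hodd : Odd (n / 2^a) := by
          have hnd : ¬ 2 ∣ (n / 2^a) := by
            have h2 := Nat.not_dvd_ordCompl Nat.prime_two hn0'
            rwa [hfa] at h2
          rw [Nat.odd_iff]
          rcases Nat.mod_two_eq_zero_or_one (n / 2^a) with h | h
          · exact absurd (Nat.dvd_of_mod_eq_zero h) hnd
          · exact h
        have hcop : Nat.Coprime (2^a) (n / 2^a) := by
          apply Nat.Coprime.pow_left
          have h2 := Nat.coprime_ordCompl Nat.prime_two hn0'
          rwa [hfa] at h2
        have hBOB : BigOmegaBelow n y = a + BigOmegaBelow (n / 2^a) y := by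
          conv_lhs => rw [← heq]
          rw [BOB_mul y (pow_ne_zero _ two_ne_zero) (by omega) hcop,
            BOB_prime_pow Nat.prime_two y a, if_pos (by exact_mod_cast hy : ((2:ℕ):ℝ) ≤ y)]
        rw [hD, Finset.mem_coe, Finset.mem_filter, Finset.mem_Ioc]
        exact ⟨⟨hm0, hmM⟩, hodd, by beta_reduce; omega⟩
      · intro n1 h1 n2 h2 h
        have e1 := hkey n1 h1
        have e2 := hkey n2 h2
        simp only at h
        rw [← e1, ← e2, h]
    have hmarkov : (D.card : ℝ) * 2^(k-a)
        ≤ ∑ m ∈ (Finset.Ioc 0 M).filter (fun m : ℕ => Odd m), (2:ℝ)^(BigOmegaBelow m y) := by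
      calc (D.card : ℝ) * 2^(k-a) = ∑ _m ∈ D, (2:ℝ)^(k-a) := by
            rw [Finset.sum_const, nsmul_eq_mul]
        _ ≤ ∑ m ∈ D, (2:ℝ)^(BigOmegaBelow m y) := by
            apply Finset.sum_le_sum
            intro m hm
            simp only [hD, Finset.mem_filter] at hm
            exact pow_le_pow_right₀ one_le_two hm.2.2
        _ ≤ ∑ m ∈ (Finset.Ioc 0 M).filter (fun m : ℕ => Odd m), (2:ℝ)^(BigOmegaBelow m y) := by
            apply Finset.sum_le_sum_of_subset_of_nonneg
            · apply Finset.monotone_filter_right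
              intro m _ hm
              exact hm.1
            · intro m _ _
              positivity
    have hfinal : ((B a).card : ℝ) * 2^(k-a) ≤ ((M:ℕ):ℝ) * (3000 * Real.log y) :=
      le_trans (by
        apply mul_le_mul_of_nonneg_right _ (by positivity)
        exact_mod_cast hinj) (hmarkov.trans (key_sum M y hy))
    have hMx : ((M:ℕ):ℝ) ≤ x / 2^a := by
      calc ((M:ℕ):ℝ) ≤ (N:ℝ) / (2:ℝ)^a := by
            have := Nat.cast_div_le (α := ℝ) (m := N) (n := 2^a)
            push_cast at this
            exact this
        _ ≤ x / 2^a := by gcongr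
    have h2ka : (0:ℝ) < 2^(k-a) := by positivity
    have h2a : (0:ℝ) < 2^a := by positivity
    have hpow : (2:ℝ)^a * (2:ℝ)^(k-a) = 2^k := by
      rw [← pow_add]
      congr 1
      omega
    calc ((B a).card : ℝ) ≤ ((M:ℕ):ℝ) * (3000 * Real.log y) / 2^(k-a) := by
          rw [le_div_iff₀ h2ka]
          exact hfinal
      _ ≤ (x / 2^a) * (3000 * Real.log y) / 2^(k-a) := by
          gcongr
      _ = 3000 * x * Real.log y / 2^k := by
          rw [← hpow]
          field_simp
  have hsum : ∑ a ∈ Finset.range k, ((B a).card : ℝ) ≤ k * (3000 * x * Real.log y / 2^k) := by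
    calc ∑ a ∈ Finset.range k, ((B a).card : ℝ)
        ≤ ∑ _a ∈ Finset.range k, (3000 * x * Real.log y / 2^k) := Finset.sum_le_sum hBbound
      _ = k * (3000 * x * Real.log y / 2^k) := by
          rw [Finset.sum_const, Finset.card_range, nsmul_eq_mul]
  have hkR : (1:ℝ) ≤ k := by exact_mod_cast hk
  have h2k : (0:ℝ) < 2^k := by positivity
  calc (A.card : ℝ) ≤ k * (3000 * x * Real.log y / 2^k) + x / 2^k :=
        hcard.trans (add_le_add hsum hCsbound)
    _ ≤ 4000 * ((k : ℝ) / 2 ^ k) * x * Real.log y := by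
        have heq : (k:ℝ) * (3000 * x * Real.log y / 2 ^ k) + x / 2 ^ k
            = (3000 * k * x * Real.log y + x) / 2^k := by ring
        have heq2 : 4000 * ((k : ℝ) / 2 ^ k) * x * Real.log y
            = (4000 * (k:ℝ) * x * Real.log y) / 2^k := by ring
        rw [heq, heq2]
        have hkL : (1:ℝ) ≤ 1000 * ((k:ℝ) * Real.log y) := by nlinarith
        have h2 : x * 1 ≤ x * (1000 * ((k:ℝ) * Real.log y)) :=
          mul_le_mul_of_nonneg_left hkL hx0.le
        gcongr
        nlinarith
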